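/- (Cramér–Rao inequality, finite sample space.) Let Y be a nonempty finite type, and for θ in an open set Θ ⊆ ℝ^k let π_θ : Y → ℝ be a family of probability mass functions with π_θ(y) > 0 for all y, such that θ ↦ π_θ(y) is continuously differentiable for each y. Assume the k×k Fisher information matrix I(θ) = Σ_y π_θ(y) · (∇_θ log π_θ(y)) (∇_θ log π_θ(y))ᵀ is nonsingular at θ. Let T : Y → ℝ^s be any statistic and define g(θ) = Σ_y π_θ(y) T(y) (so T is unbiased for g), and let G(θ) be the s×k Jacobian matrix of g at θ. Then the covariance matrix Cov_{π_θ}(T) = Σ_y π_θ(y) (T(y) − g(θ))(T(y) − g(θ))ᵀ satisfies Cov_{π_θ}(T) − G(θ) I(θ)⁻¹ G(θ)ᵀ is positive semidefinite. -/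

import Mathlib

open Matrix

/-- Cramér–Rao inequality over a finite sample space `Y`: for a strictly positive,
continuously differentiable statistical model `P θ : Y → ℝ` on an open set `Θ ∋ θ₀`
with nonsingular Fisher information matrix `I`, and any statistic `T : Y → ℝ^s` with
mean `gfun θ = Σ_y P θ y • T y` and Jacobian `G` at `θ₀`, the matrix
`Cov(T) − G I⁻¹ Gᵀ` is positive semidefinite. -/
theorem stmt_3 {k s : ℕ} (Y : Type) [Fintype Y] [Nonempty Y]
    (Θ : Set (Fin k → ℝ)) (hΘ : IsOpen Θ) (θ₀ : Fin k → ℝ) (hθ₀ : θ₀ ∈ Θ)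
    (P : (Fin k → ℝ) → Y → ℝ)
    (hpos : ∀ θ ∈ Θ, ∀ y : Y, 0 < P θ y)
    (hsum : ∀ θ ∈ Θ, ∑ y : Y, P θ y = 1)
    (hdiff : ∀ y : Y, ContDiffOn ℝ 1 (fun θ => P θ y) Θ)
    (T : Y → Fin s → ℝ)
    -- score vector of outcome `y` at `θ₀`, `∇_θ log P θ y |_{θ₀}`
    (score : Y → Fin k → ℝ)
    (hscore : ∀ y i, score y i =
      fderiv ℝ (fun θ => P θ y) θ₀ (Pi.single i 1) / P θ₀ y)
    -- Fisher information matrix at `θ₀`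
    (I : Matrix (Fin k) (Fin k) ℝ)
    (hI : ∀ a b, I a b = ∑ y : Y, P θ₀ y * (score y a * score y b))
    (hInonsing : IsUnit I.det)
    -- mean of the statistic `T` and its Jacobian at `θ₀`
    (gfun : (Fin k → ℝ) → Fin s → ℝ)
    (hgfun : ∀ θ j, gfun θ j = ∑ y : Y, P θ y * T y j)
    (G : Matrix (Fin s) (Fin k) ℝ)
    (hG : ∀ j i, G j i = fderiv ℝ (fun θ => gfun θ j) θ₀ (Pi.single i 1))
    -- covariance matrix of `T` under `P θ₀`
    (Cov : Matrix (Fin s) (Fin s) ℝ)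
    (hCov : ∀ a b, Cov a b =
      ∑ y : Y, P θ₀ y * ((T y a - gfun θ₀ a) * (T y b - gfun θ₀ b))) :
    (Cov - G * I⁻¹ * Gᵀ).PosSemidef := by
  classical
  have hmem : Θ ∈ nhds θ₀ := hΘ.mem_nhds hθ₀
  have hd : ∀ y : Y, DifferentiableAt ℝ (fun θ => P θ y) θ₀ := fun y =>
    ((hdiff y).contDiffAt hmem).differentiableAt one_ne_zero
  set L : Y → (Fin k → ℝ) →L[ℝ] ℝ := fun y => fderiv ℝ (fun θ => P θ y) θ₀ with hLdef
  have hLd : ∀ y, HasFDerivAt (fun θ => P θ y) (L y) θ₀ := fun y => (hd y).hasFDerivAt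
  -- the derivative of the total mass is zero
  have hsum0 : ∀ i, ∑ y : Y, (L y) (Pi.single i 1) = 0 := by
    have h1 : HasFDerivAt (fun θ => ∑ y : Y, P θ y) (∑ y : Y, L y) θ₀ := by
      exact HasFDerivAt.fun_sum (fun y _ => hLd y)
    have h2 : HasFDerivAt (fun θ => ∑ y : Y, P θ y)
        (0 : (Fin k → ℝ) →L[ℝ] ℝ) θ₀ := by
      refine (hasFDerivAt_const (1:ℝ) θ₀).congr_of_eventuallyEq ?_
      filter_upwards [hmem] with θ hθ
      exact hsum θ hθ
    have h3 : (∑ y : Y, L y) = 0 := h1.unique h2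
    intro i
    have := congrArg (fun f : (Fin k → ℝ) →L[ℝ] ℝ => f (Pi.single i 1)) h3
    simpa using this
  have hLsc : ∀ y i, (L y) (Pi.single i 1) = P θ₀ y * score y i := by
    intro y i
    have hPy : P θ₀ y ≠ 0 := (hpos θ₀ hθ₀ y).ne'
    rw [hscore y i, mul_div_cancel₀ _ hPy]
  have hE1 : ∀ i, ∑ y : Y, P θ₀ y * score y i = 0 := by
    intro i
    have := hsum0 i
    simpa [hLsc] using this
  -- Jacobian identity
  have hGval : ∀ j i, G j i = ∑ y : Y, P θ₀ y * score y i * T y j := by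
    intro j i
    have hfe : (fun θ => gfun θ j) = fun θ => ∑ y : Y, P θ y * T y j := by
      funext θ; exact hgfun θ j
    have hder : HasFDerivAt (fun θ => ∑ y : Y, P θ y * T y j)
        (∑ y : Y, T y j • L y) θ₀ :=
      HasFDerivAt.fun_sum (fun y _ => (hLd y).mul_const (T y j))
    rw [hG j i, hfe, hder.fderiv]
    simp only [ContinuousLinearMap.sum_apply, ContinuousLinearMap.smul_apply, hLsc,
      smul_eq_mul]
    exact Finset.sum_congr rfl fun y _ => by ring
  have hE2 : ∀ j i, ∑ y : Y, P θ₀ y * score y i * (T y j - gfun θ₀ j) = G j i := by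
    intro j i
    have h : ∑ y : Y, P θ₀ y * score y i * (T y j - gfun θ₀ j)
        = (∑ y : Y, P θ₀ y * score y i * T y j)
          - (∑ y : Y, P θ₀ y * score y i) * gfun θ₀ j := by
      rw [Finset.sum_mul, ← Finset.sum_sub_distrib]
      exact Finset.sum_congr rfl fun y _ => by ring
    rw [h, hE1 i, hGval j i]; ring
  -- symmetry facts
  have hIsym : Iᵀ = I := by
    ext a b
    rw [transpose_apply, hI, hI]
    exact Finset.sum_congr rfl fun y _ => by ring
  have hCovsym : Covᵀ = Cov := by
    ext a b
    rw [transpose_apply, hCov, hCov]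
    exact Finset.sum_congr rfl fun y _ => by ring
  have hXsym : (G * I⁻¹ * Gᵀ)ᵀ = G * I⁻¹ * Gᵀ := by
    rw [transpose_mul, transpose_mul, transpose_transpose, transpose_nonsing_inv, hIsym,
      ← Matrix.mul_assoc]
  rw [posSemidef_iff_dotProduct_mulVec]
  constructor
  · show (Cov - G * I⁻¹ * Gᵀ)ᴴ = _
    have hct : ∀ M : Matrix (Fin s) (Fin s) ℝ, Mᴴ = Mᵀ := fun M => by
      ext a b; simp [conjTranspose_apply]
    rw [hct, transpose_sub, hCovsym, hXsym]
  · intro v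
    set w : Fin k → ℝ := I⁻¹ *ᵥ (Gᵀ *ᵥ v) with hw
    set a : Y → ℝ := fun y => ∑ j, v j * (T y j - gfun θ₀ j) with ha
    set b : Y → ℝ := fun y => ∑ i, w i * score y i with hb
    have hX1 : (G * I⁻¹ * Gᵀ) *ᵥ v = G *ᵥ w := by
      rw [hw, mulVec_mulVec, mulVec_mulVec, Matrix.mul_assoc]
    -- Claim A
    have hA : ∑ y : Y, P θ₀ y * (a y * a y) = v ⬝ᵥ (Cov *ᵥ v) := by
      calc ∑ y : Y, P θ₀ y * (a y * a y)
          = ∑ y : Y, ∑ j1, ∑ j2,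
              v j1 * (P θ₀ y * ((T y j1 - gfun θ₀ j1) * (T y j2 - gfun θ₀ j2)) * v j2) := by
            refine Finset.sum_congr rfl fun y _ => ?_
            simp only [ha]
            rw [Finset.sum_mul_sum, Finset.mul_sum]
            refine Finset.sum_congr rfl fun j1 _ => ?_
            rw [Finset.mul_sum]
            exact Finset.sum_congr rfl fun j2 _ => by ring
        _ = ∑ j1, ∑ j2, ∑ y : Y,
              v j1 * (P θ₀ y * ((T y j1 - gfun θ₀ j1) * (T y j2 - gfun θ₀ j2)) * v j2) := by
            rw [Finset.sum_comm]
            exact Finset.sum_congr rfl fun j1 _ => Finset.sum_comm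
        _ = v ⬝ᵥ (Cov *ᵥ v) := by
            simp only [dotProduct, mulVec, hCov, Finset.mul_sum, Finset.sum_mul]
    -- Claim B
    have hB : ∑ y : Y, P θ₀ y * (a y * b y) = v ⬝ᵥ ((G * I⁻¹ * Gᵀ) *ᵥ v) := by
      rw [hX1]
      calc ∑ y : Y, P θ₀ y * (a y * b y)
          = ∑ y : Y, ∑ j, ∑ i,
              v j * w i * (P θ₀ y * score y i * (T y j - gfun θ₀ j)) := by
            refine Finset.sum_congr rfl fun y _ => ?_
            simp only [ha, hb]
            rw [Finset.sum_mul_sum, Finset.mul_sum]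
            refine Finset.sum_congr rfl fun j _ => ?_
            rw [Finset.mul_sum]
            exact Finset.sum_congr rfl fun i _ => by ring
        _ = ∑ j, ∑ i, v j * w i *
              ∑ y : Y, P θ₀ y * score y i * (T y j - gfun θ₀ j) := by
            rw [Finset.sum_comm]
            refine Finset.sum_congr rfl fun j _ => ?_
            rw [Finset.sum_comm]
            refine Finset.sum_congr rfl fun i _ => ?_
            rw [Finset.mul_sum]
        _ = ∑ j, ∑ i, v j * w i * G j i := by
            simp only [hE2]
        _ = v ⬝ᵥ (G *ᵥ w) := by
            simp only [dotProduct, mulVec, Finset.mul_sum]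
            exact Finset.sum_congr rfl fun j _ => Finset.sum_congr rfl fun i _ => by ring
    -- Claim C
    have hIw : I *ᵥ w = Gᵀ *ᵥ v := by
      rw [hw, mulVec_mulVec, Matrix.mul_nonsing_inv I hInonsing, one_mulVec]
    have hswap : w ⬝ᵥ (Gᵀ *ᵥ v) = v ⬝ᵥ (G *ᵥ w) := by
      rw [dotProduct_mulVec, vecMul_transpose, dotProduct_comm]
    have hC : ∑ y : Y, P θ₀ y * (b y * b y) = v ⬝ᵥ ((G * I⁻¹ * Gᵀ) *ᵥ v) := by
      rw [hX1]
      calc ∑ y : Y, P θ₀ y * (b y * b y)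
          = ∑ y : Y, ∑ i1, ∑ i2,
              w i1 * (P θ₀ y * (score y i1 * score y i2) * w i2) := by
            refine Finset.sum_congr rfl fun y _ => ?_
            simp only [hb]
            rw [Finset.sum_mul_sum, Finset.mul_sum]
            refine Finset.sum_congr rfl fun i1 _ => ?_
            rw [Finset.mul_sum]
            exact Finset.sum_congr rfl fun i2 _ => by ring
        _ = ∑ i1, ∑ i2, ∑ y : Y,
              w i1 * (P θ₀ y * (score y i1 * score y i2) * w i2) := by
            rw [Finset.sum_comm]
            exact Finset.sum_congr rfl fun i1 _ => Finset.sum_comm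
        _ = w ⬝ᵥ (I *ᵥ w) := by
            simp only [dotProduct, mulVec, hI, Finset.mul_sum, Finset.sum_mul]
        _ = v ⬝ᵥ (G *ᵥ w) := by rw [hIw, hswap]
    -- combine
    have hnn : 0 ≤ ∑ y : Y, P θ₀ y * ((a y - b y) * (a y - b y)) :=
      Finset.sum_nonneg fun y _ => mul_nonneg (hpos θ₀ hθ₀ y).le (mul_self_nonneg _)
    have hexp : ∑ y : Y, P θ₀ y * ((a y - b y) * (a y - b y))
        = (∑ y : Y, P θ₀ y * (a y * a y)) - 2 * (∑ y : Y, P θ₀ y * (a y * b y))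
          + (∑ y : Y, P θ₀ y * (b y * b y)) := by
      rw [Finset.mul_sum, ← Finset.sum_sub_distrib, ← Finset.sum_add_distrib]
      exact Finset.sum_congr rfl fun y _ => by ring
    have hfin : v ⬝ᵥ ((Cov - G * I⁻¹ * Gᵀ) *ᵥ v)
        = ∑ y : Y, P θ₀ y * ((a y - b y) * (a y - b y)) := by
      rw [sub_mulVec, dotProduct_sub, hexp, hA, hB, hC]
      ring
    have hst : star v = v := by
      funext i; simp
    rw [hst, hfin]
    exact hnn
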